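/- Let E be a finite-dimensional real normed space, P a topological space, t0, t1 ∈ ℝ, p0 ∈ P, U ⊆ E open, K ⊆ U compact, and X : ℝ × E × P → E such that s ↦ X(s, y, p) is measurable for every (y, p) and y ↦ X(s, y, p) is continuous for every (s, p). Suppose there exist an open neighbourhood O1 of p0, a compact set K' ⊆ E, and a map Φ : ℝ × E × P → E such that: (i) Φ(s, x, p) ∈ K' for all (s, x, p) ∈ |t0, t1| × K × O1; (ii) for each (x, p) ∈ K × O1 the map s ↦ X(s, Φ(s, x, p), p) is integrable on |t0, t1| and Φ(t, x, p) = x + ∫_{t0}^{t} X(s, Φ(s, x, p), p) ds for all t ∈ |t0, t1|; (iii) for each (x̄, p̄) ∈ K × O1 and ε > 0 there are a neighbourhood V of x̄ and a neighbourhood O ⊆ O1 of p̄ with ‖Φ(t, x, p) − Φ(t, x̄, p̄)‖ < ε for all t ∈ |t0, t1|, x ∈ V ∩ K, p ∈ O; (iv) there is a nonnegative ℓ : ℝ → ℝ integrable on |t0, t1| with ‖X(s, y1, p0) − X(s, y2, p0)‖ ≤ ℓ(s) ‖y1 − y2‖ for all s ∈ |t0, t1| and y1, y2 ∈ K'; (v)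 for every ε > 0 there is a neighbourhood O2 ⊆ O1 of p0 such that for every p ∈ O2 there is an integrable g : ℝ → ℝ on |t0, t1| with ‖X(s, y, p) − X(s, y, p0)‖ ≤ g(s) for all s ∈ |t0, t1|, y ∈ K', and ∫_{|t0,t1|} g(s) ds < ε. Then for every ε > 0 there is a neighbourhood O of p0 such that ‖Φ(t1, x, p) − Φ(t1, x, p0)‖ < ε for all x ∈ K and all p ∈ O. -/

import Mathlib

open Set MeasureTheory intervalIntegral

/-- Integral-form Grönwall-type estimate on `[a, b]`, proved by elementary
iteration over sublevel sets of the primitive of `l`. -/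
lemma gronwall_aux {E : Type*} [NormedAddCommGroup E] [NormedSpace ℝ E]
    (a b : ℝ) (hab : a ≤ b)
    (f : ℝ → E) (hf : IntegrableOn f (Icc a b))
    (Δ : ℝ → E) (hΔ : ∀ t ∈ Icc a b, Δ t = ∫ s in a..t, f s)
    (g : ℝ → ℝ) (hg : IntegrableOn g (Icc a b)) (hg0 : ∀ s ∈ Icc a b, 0 ≤ g s)
    (l : ℝ → ℝ) (hl : IntegrableOn l (Icc a b)) (hl0 : ∀ s, 0 ≤ l s)
    (hfb : ∀ s ∈ Icc a b, ‖f s‖ ≤ g s + l s * ‖Δ s‖)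
    (G : ℝ) (hG0 : 0 ≤ G) (hgG : ∫ s in Icc a b, g s ≤ G)
    (n : ℕ) (hn : ∫ s in Icc a b, l s ≤ (n : ℝ) / 2) :
    ∀ t ∈ Icc a b, ‖Δ t‖ ≤ 3 * 2 ^ n * G := by
  have haIcc : a ∈ Icc a b := ⟨le_rfl, hab⟩
  -- continuity of Δ
  have hΔc : ContinuousOn Δ (Icc a b) := by
    have h1 : IntegrableOn f (uIcc a b) := by rwa [uIcc_of_le hab]
    have := continuousOn_primitive_interval (μ := volume) h1
    rw [uIcc_of_le hab] at this
    exact this.congr hΔ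
  obtain ⟨C, hC⟩ := isCompact_Icc.exists_bound_of_continuousOn hΔc
  have hC0 : 0 ≤ C := le_trans (norm_nonneg _) (hC a haIcc)
  -- integrability of l * ‖Δ‖
  have hΔm : AEStronglyMeasurable Δ (volume.restrict (Icc a b)) :=
    hΔc.aestronglyMeasurable measurableSet_Icc
  have hlΔ : IntegrableOn (fun s => l s * ‖Δ s‖) (Icc a b) := by
    refine Integrable.mono' (hl.const_mul C) (hl.aestronglyMeasurable.mul hΔm.norm) ?_
    refine (ae_restrict_iff' measurableSet_Icc).2 (Filter.Eventually.of_forall fun s hs => ?_)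
    rw [Real.norm_eq_abs, abs_of_nonneg (mul_nonneg (hl0 s) (norm_nonneg _)), mul_comm C (l s)]
    exact mul_le_mul_of_nonneg_left (hC s hs) (hl0 s)
  -- interval integrability helper
  have hsubI : ∀ u ∈ Icc a b, ∀ t ∈ Icc a b, uIcc u t ⊆ Icc a b := by
    intro u hu t ht
    rw [← uIcc_of_le hab] at hu ht ⊢
    exact uIcc_subset_uIcc hu ht
  -- the primitive ψ of l
  set ψ : ℝ → ℝ := fun t => ∫ s in Ioc a t, l s with hψdef
  have hψc : ContinuousOn ψ (Icc a b) := continuousOn_primitive hl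
  have hψ0 : ∀ t, 0 ≤ ψ t := fun t => setIntegral_nonneg measurableSet_Ioc fun s _ => hl0 s
  have hψa : ψ a = 0 := by simp [hψdef]
  have hψeq : ∀ t ∈ Icc a b, ψ t = ∫ s in a..t, l s := fun t ht =>
    (integral_of_le ht.1).symm
  have hψmono : ∀ u ∈ Icc a b, ∀ t ∈ Icc a b, u ≤ t → ψ u ≤ ψ t := by
    intro u hu t ht hut
    refine setIntegral_mono_set (hl.mono_set fun s hs => ⟨le_of_lt hs.1, le_trans hs.2 ht.2⟩)
      (Filter.Eventually.of_forall fun s => hl0 s) ?_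
    exact HasSubset.Subset.eventuallyLE (Ioc_subset_Ioc_right hut)
  have hψdiff : ∀ u ∈ Icc a b, ∀ t ∈ Icc a b, u ≤ t →
      ∫ s in Ioc u t, l s = ψ t - ψ u := by
    intro u hu t ht hut
    have h1 : IntervalIntegrable l volume a t := (hl.mono_set (hsubI a haIcc t ht)).intervalIntegrable
    have h2 : IntervalIntegrable l volume a u := (hl.mono_set (hsubI a haIcc u hu)).intervalIntegrable
    rw [← integral_of_le hut, hψeq t ht, hψeq u hu, ← integral_interval_sub_left h1 h2]
  have hψb : ∀ t ∈ Icc a b, ψ t ≤ (n : ℝ) / 2 := by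
    intro t ht
    refine le_trans (hψmono t ht b ⟨hab, le_rfl⟩ ht.2) ?_
    rw [hψdef]
    calc ∫ s in Ioc a b, l s = ∫ s in Icc a b, l s := integral_Icc_eq_integral_Ioc.symm
      _ ≤ (n : ℝ) / 2 := hn
  -- basic estimate between two points
  have est : ∀ u ∈ Icc a b, ∀ t ∈ Icc a b, u ≤ t →
      ‖Δ t‖ ≤ ‖Δ u‖ + G + ∫ s in Ioc u t, l s * ‖Δ s‖ := by
    intro u hu t ht hut
    have hsub : Ioc u t ⊆ Icc a b := fun s hs => ⟨le_trans hu.1 hs.1.le, le_trans hs.2 ht.2⟩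
    have heq : Δ t = Δ u + ∫ s in u..t, f s := by
      rw [hΔ t ht, hΔ u hu,
        ← integral_interval_sub_left ((hf.mono_set (hsubI a haIcc t ht)).intervalIntegrable) ((hf.mono_set (hsubI a haIcc u hu)).intervalIntegrable)]
      abel
    have hgle : ∫ s in Ioc u t, g s ≤ G := by
      refine le_trans ?_ hgG
      refine setIntegral_mono_set hg ?_ (HasSubset.Subset.eventuallyLE hsub)
      exact (ae_restrict_iff' measurableSet_Icc).2 (Filter.Eventually.of_forall hg0)
    calc ‖Δ t‖ ≤ ‖Δ u‖ + ‖∫ s in u..t, f s‖ := by rw [heq]; exact norm_add_le _ _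
      _ ≤ ‖Δ u‖ + ∫ s in Ioc u t, ‖f s‖ := by
          have := norm_integral_le_integral_norm_uIoc (f := f) (a := u) (b := t) (μ := volume)
          rw [uIoc_of_le hut] at this
          linarith
      _ ≤ ‖Δ u‖ + ∫ s in Ioc u t, (g s + l s * ‖Δ s‖) := by
          refine add_le_add_right ?_ _
          refine setIntegral_mono_on ((hf.mono_set hsub).norm)
            ((hg.mono_set hsub).add (hlΔ.mono_set hsub)) measurableSet_Ioc ?_
          exact fun s hs => hfb s (hsub hs)
      _ = ‖Δ u‖ + ((∫ s in Ioc u t, g s) + ∫ s in Ioc u t, l s * ‖Δ s‖) := by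
          rw [integral_add (hg.mono_set hsub) (hlΔ.mono_set hsub)]
      _ ≤ ‖Δ u‖ + G + ∫ s in Ioc u t, l s * ‖Δ s‖ := by linarith
  have hΔa : Δ a = 0 := by rw [hΔ a haIcc]; simp
  -- main induction
  have key : ∀ i : ℕ, ∀ t ∈ Icc a b, ψ t ≤ (i : ℝ) / 2 → ‖Δ t‖ ≤ (3 * 2 ^ i - 2) * G := by
    intro i
    induction i with
    | zero =>
      intro t ht hψt
      have hψt0 : ψ t = 0 := le_antisymm (by simpa using hψt) (hψ0 t)
      have h1 := est a haIcc t ht ht.1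
      have h2 : ∫ s in Ioc a t, l s * ‖Δ s‖ ≤ 0 := by
        have hsub : Ioc a t ⊆ Icc a b := fun s hs => ⟨hs.1.le, le_trans hs.2 ht.2⟩
        have hle : ∫ s in Ioc a t, l s * ‖Δ s‖ ≤ ∫ s in Ioc a t, l s * C := by
          refine setIntegral_mono_on (hlΔ.mono_set hsub)
            ((hl.mono_set hsub).mul_const C) measurableSet_Ioc ?_
          exact fun s hs => mul_le_mul_of_nonneg_left (hC s (hsub hs)) (hl0 s)
        have heq2 : ∫ s in Ioc a t, l s * C = (ψ t - ψ a) * C := by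
          rw [← hψdiff a haIcc t ht ht.1, MeasureTheory.integral_mul_const]
        rw [heq2, hψa, hψt0] at hle
        simpa using hle
      rw [hΔa] at h1
      simp only [norm_zero, zero_add] at h1
      have : (3 * (2:ℝ) ^ 0 - 2) * G = G := by norm_num
      linarith
    | succ i ih =>
      intro t ht hψt
      set Bi : ℝ := (3 * 2 ^ i - 2) * G with hBidef
      have hBi0 : 0 ≤ Bi := by
        have h2i : (1:ℝ) ≤ 2 ^ i := one_le_pow₀ (by norm_num)
        exact mul_nonneg (by linarith) hG0
      set S : Set ℝ := {u | u ∈ Icc a b ∧ ψ u ≤ ((i : ℝ) + 1) / 2} with hSdef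
      have haS : a ∈ S := ⟨haIcc, by rw [hψa]; positivity⟩
      have hbdd : BddAbove ((fun u => ‖Δ u‖) '' S) := by
        refine ⟨C, ?_⟩
        rintro _ ⟨u, hu, rfl⟩
        exact hC u hu.1
      set M' : ℝ := sSup ((fun u => ‖Δ u‖) '' S) with hM'def
      have hM'le : ∀ u ∈ S, ‖Δ u‖ ≤ M' := fun u hu => le_csSup hbdd ⟨u, hu, rfl⟩
      have hM'0 : 0 ≤ M' := le_trans (norm_nonneg _) (hM'le a haS)
      have subkey : ∀ u ∈ S, ‖Δ u‖ ≤ Bi + G + M' / 2 := by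
        intro u hu
        by_cases hcase : ψ u ≤ (i : ℝ) / 2
        · have := ih u hu.1 hcase
          linarith
        · push_neg at hcase
          set T : Set ℝ := Icc a u ∩ ψ ⁻¹' (Iic ((i : ℝ) / 2)) with hTdef
          have haT : a ∈ T := ⟨⟨le_rfl, hu.1.1⟩, by rw [mem_preimage, mem_Iic, hψa]; positivity⟩
          have hTbdd : BddAbove T := ⟨u, fun v hv => hv.1.2⟩
          have hTclosed : IsClosed T :=
            (hψc.mono (Icc_subset_Icc le_rfl hu.1.2)).preimage_isClosed_of_isClosed
              isClosed_Icc isClosed_Iic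
          set a' : ℝ := sSup T with ha'def
          have ha'T : a' ∈ T := hTclosed.csSup_mem ⟨a, haT⟩ hTbdd
          have ha'Icc : a' ∈ Icc a b := ⟨ha'T.1.1, le_trans ha'T.1.2 hu.1.2⟩
          have ha'u : a' < u := by
            rcases lt_or_eq_of_le ha'T.1.2 with h | h
            · exact h
            · exact absurd (h ▸ ha'T.2) (not_le.2 hcase)
          have hup : ∀ v ∈ Ioc a' u, (i : ℝ) / 2 ≤ ψ v := by
            intro v hv
            by_contra hlt
            push_neg at hlt
            have hvT : v ∈ T := ⟨⟨le_trans ha'T.1.1 hv.1.le, hv.2⟩, hlt.le⟩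
            exact absurd (le_csSup hTbdd hvT) (not_le.2 hv.1)
          have hψa' : (i : ℝ) / 2 ≤ ψ a' := by
            have hne : (nhdsWithin a' (Ioc a' u)).NeBot := by
              rw [← mem_closure_iff_nhdsWithin_neBot, closure_Ioc ha'u.ne]
              exact ⟨le_rfl, ha'u.le⟩
            have hsub2 : Ioc a' u ⊆ Icc a b :=
              fun v hv => ⟨le_trans ha'Icc.1 hv.1.le, le_trans hv.2 hu.1.2⟩
            have htd : Filter.Tendsto ψ (nhdsWithin a' (Ioc a' u)) (nhds (ψ a')) :=
              (hψc a' ha'Icc).mono_left (nhdsWithin_mono _ hsub2)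
            exact ge_of_tendsto htd (eventually_mem_nhdsWithin.mono hup)
          have hΔa' : ‖Δ a'‖ ≤ Bi := ih a' ha'Icc ha'T.2
          have hsub : Ioc a' u ⊆ Icc a b :=
            fun s hs => ⟨le_trans ha'Icc.1 hs.1.le, le_trans hs.2 hu.1.2⟩
          have hlast : ∫ s in Ioc a' u, l s * ‖Δ s‖ ≤ M' * (1 / 2) := by
            have h1 : ∫ s in Ioc a' u, l s * ‖Δ s‖ ≤ ∫ s in Ioc a' u, l s * M' := by
              refine setIntegral_mono_on (hlΔ.mono_set hsub)
                ((hl.mono_set hsub).mul_const M') measurableSet_Ioc ?_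
              intro s hs
              have hsS : s ∈ S :=
                ⟨hsub hs, le_trans (hψmono s (hsub hs) u hu.1 hs.2) hu.2⟩
              exact mul_le_mul_of_nonneg_left (hM'le s hsS) (hl0 s)
            have h2 : ∫ s in Ioc a' u, l s * M' = (ψ u - ψ a') * M' := by
              rw [← hψdiff a' ha'Icc u hu.1 ha'u.le, MeasureTheory.integral_mul_const]
            have h3 : ψ u - ψ a' ≤ 1 / 2 := by
              have := hu.2
              linarith
            have h4 : (ψ u - ψ a') * M' ≤ (1 / 2) * M' :=
              mul_le_mul_of_nonneg_right h3 hM'0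
            rw [h2] at h1
            linarith
          have hest := est a' ha'Icc u hu.1 ha'u.le
          linarith
      have hM'b : M' ≤ Bi + G + M' / 2 := by
        refine csSup_le ⟨_, ⟨a, haS, rfl⟩⟩ ?_
        rintro _ ⟨u, hu, rfl⟩
        exact subkey u hu
      have htS : t ∈ S := ⟨ht, by push_cast at hψt; linarith⟩
      have h1 := hM'le t htS
      have h2 : (3 * (2:ℝ) ^ (i + 1) - 2) * G = 2 * (Bi + G) := by
        rw [hBidef]; ring
      rw [h2]
      linarith
  intro t ht
  have h1 := key n t ht (hψb t ht)
  have h2 : (3 * (2:ℝ) ^ n - 2) * G ≤ 3 * 2 ^ n * G := by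
    have : (3 * (2:ℝ) ^ n - 2) ≤ 3 * 2 ^ n := by linarith
    exact mul_le_mul_of_nonneg_right this hG0
  linarith

/-- The C⁰ case of the paper's main Theorem ('Continuous dependence of fixed-time flow on
parameter') in the local model `E = ℝⁿ`: under the stated hypotheses on the flow `Φ` of
the time- and parameter-dependent vector field `X`, the fixed-time flow depends
continuously (uniformly over the compact set `K`) on the parameter at `p0`. -/
theorem fixed_time_flow_continuous_in_parameter_C0
    {E P : Type*} [NormedAddCommGroup E] [NormedSpace ℝ E] [FiniteDimensional ℝ E]
    [MeasurableSpace E] [BorelSpace E] [TopologicalSpace P]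
    (t0 t1 : ℝ) (p0 : P) (U : Set E) (hU : IsOpen U)
    (K : Set E) (hK : IsCompact K) (hKU : K ⊆ U)
    (X : ℝ → E → P → E)
    (hXmeas : ∀ (y : E) (p : P), Measurable fun s => X s y p)
    (hXcont : ∀ (s : ℝ) (p : P), Continuous fun y => X s y p)
    (O1 : Set P) (hO1 : IsOpen O1) (hp0 : p0 ∈ O1)
    (K' : Set E) (hK' : IsCompact K')
    (Φ : ℝ → E → P → E)
    (h1 : ∀ s ∈ uIcc t0 t1, ∀ x ∈ K, ∀ p ∈ O1, Φ s x p ∈ K')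
    (h2 : ∀ x ∈ K, ∀ p ∈ O1,
      IntegrableOn (fun s => X s (Φ s x p) p) (uIcc t0 t1) ∧
      ∀ t ∈ uIcc t0 t1, Φ t x p = x + ∫ s in t0..t, X s (Φ s x p) p)
    (h3 : ∀ xb ∈ K, ∀ pb ∈ O1, ∀ ε > (0 : ℝ),
      ∃ V : Set E, IsOpen V ∧ xb ∈ V ∧ ∃ O : Set P, IsOpen O ∧ pb ∈ O ∧ O ⊆ O1 ∧
        ∀ t ∈ uIcc t0 t1, ∀ x ∈ V ∩ K, ∀ p ∈ O, ‖Φ t x p - Φ t xb pb‖ < ε)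
    (l : ℝ → ℝ) (hl0 : ∀ s, 0 ≤ l s) (hlint : IntegrableOn l (uIcc t0 t1))
    (h4 : ∀ s ∈ uIcc t0 t1, ∀ y1 ∈ K', ∀ y2 ∈ K',
      ‖X s y1 p0 - X s y2 p0‖ ≤ l s * ‖y1 - y2‖)
    (h5 : ∀ ε > (0 : ℝ), ∃ O2 : Set P, IsOpen O2 ∧ p0 ∈ O2 ∧ O2 ⊆ O1 ∧
      ∀ p ∈ O2, ∃ g : ℝ → ℝ, IntegrableOn g (uIcc t0 t1) ∧
        (∀ s ∈ uIcc t0 t1, ∀ y ∈ K', ‖X s y p - X s y p0‖ ≤ g s) ∧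
        ∫ s in uIcc t0 t1, g s < ε) :
    ∀ ε > (0 : ℝ), ∃ O : Set P, IsOpen O ∧ p0 ∈ O ∧
      ∀ x ∈ K, ∀ p ∈ O, ‖Φ t1 x p - Φ t1 x p0‖ < ε := by
  intro ε hε
  rcases K.eq_empty_or_nonempty with hKe | ⟨x₀, hx₀⟩
  · exact ⟨O1, hO1, hp0, fun x hx => by rw [hKe] at hx; exact absurd hx (notMem_empty x)⟩
  have hK'ne : Φ t0 x₀ p0 ∈ K' := h1 t0 left_mem_uIcc x₀ hx₀ p0 hp0
  set L : ℝ := ∫ s in uIcc t0 t1, l s with hLdef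
  have hL0 : 0 ≤ L := setIntegral_nonneg measurableSet_uIcc fun s _ => hl0 s
  set n : ℕ := ⌈2 * L⌉₊ with hndef
  have hLn : L ≤ (n : ℝ) / 2 := by
    have := Nat.le_ceil (2 * L)
    rw [← hndef] at this
    linarith
  have hpow : (0 : ℝ) < 3 * 2 ^ n := by positivity
  set ε' : ℝ := ε / (3 * 2 ^ n) with hε'def
  have hε' : 0 < ε' := div_pos hε hpow
  obtain ⟨O2, hO2open, hp0O2, hO2sub, hO2⟩ := h5 ε' hε'
  refine ⟨O2, hO2open, hp0O2, ?_⟩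
  intro x hx p hp
  obtain ⟨g, hgint, hgbd, hgsum⟩ := hO2 p hp
  have hpO1 : p ∈ O1 := hO2sub hp
  obtain ⟨hint_p, heq_p⟩ := h2 x hx p hpO1
  obtain ⟨hint_p0, heq_p0⟩ := h2 x hx p0 hp0
  set f : ℝ → E := fun s => X s (Φ s x p) p - X s (Φ s x p0) p0 with hfdef
  set Δ : ℝ → E := fun t => Φ t x p - Φ t x p0 with hΔdef
  have hfint : IntegrableOn f (uIcc t0 t1) := hint_p.sub hint_p0
  have hΔeq : ∀ t ∈ uIcc t0 t1, Δ t = ∫ s in t0..t, f s := by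
    intro t htm
    have hsub : uIcc t0 t ⊆ uIcc t0 t1 := uIcc_subset_uIcc left_mem_uIcc htm
    rw [hΔdef]
    simp only
    rw [heq_p t htm, heq_p0 t htm, add_sub_add_left_eq_sub,
      ← intervalIntegral.integral_sub ((hint_p.mono_set hsub).intervalIntegrable)
        ((hint_p0.mono_set hsub).intervalIntegrable)]
  have hfbd : ∀ s ∈ uIcc t0 t1, ‖f s‖ ≤ g s + l s * ‖Δ s‖ := by
    intro s hs
    have hy : Φ s x p ∈ K' := h1 s hs x hx p hpO1
    have hy' : Φ s x p0 ∈ K' := h1 s hs x hx p0 hp0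
    calc ‖f s‖ = ‖(X s (Φ s x p) p - X s (Φ s x p) p0) +
        (X s (Φ s x p) p0 - X s (Φ s x p0) p0)‖ := by rw [hfdef]; simp only; congr 1; abel
      _ ≤ ‖X s (Φ s x p) p - X s (Φ s x p) p0‖ +
          ‖X s (Φ s x p) p0 - X s (Φ s x p0) p0‖ := norm_add_le _ _
      _ ≤ g s + l s * ‖Δ s‖ :=
          add_le_add (hgbd s hs _ hy) (h4 s hs _ hy _ hy')
  have hg0' : ∀ s ∈ uIcc t0 t1, 0 ≤ g s := fun s hs =>
    le_trans (norm_nonneg _) (hgbd s hs _ hK'ne)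
  set G : ℝ := ∫ s in uIcc t0 t1, g s with hGdef
  have hG0 : 0 ≤ G := setIntegral_nonneg measurableSet_uIcc hg0'
  suffices h : ‖Δ t1‖ ≤ 3 * 2 ^ n * G by
    have h2' : 3 * 2 ^ n * G < 3 * 2 ^ n * ε' := by
      exact mul_lt_mul_of_pos_left hgsum hpow
    have h3' : 3 * 2 ^ n * ε' = ε := by
      rw [hε'def]
      field_simp
    calc ‖Φ t1 x p - Φ t1 x p0‖ = ‖Δ t1‖ := rfl
      _ ≤ 3 * 2 ^ n * G := h
      _ < ε := by rw [← h3']; exact h2'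
  rcases le_total t0 t1 with hor | hor
  · have huIcc : uIcc t0 t1 = Icc t0 t1 := uIcc_of_le hor
    rw [huIcc] at hfint hΔeq hfbd hg0' hgint hlint
    have hGeq : ∫ s in Icc t0 t1, g s ≤ G := le_of_eq (by rw [hGdef, huIcc])
    have hLeq : ∫ s in Icc t0 t1, l s ≤ (n : ℝ) / 2 := by
      rw [show (∫ s in Icc t0 t1, l s) = L by rw [hLdef, huIcc]]
      exact hLn
    exact gronwall_aux t0 t1 hor f hfint Δ hΔeq g hgint hg0' l hlint hl0 hfbd
      G hG0 hGeq n hLeq t1 ⟨hor, le_rfl⟩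
  · have huIcc : uIcc t0 t1 = Icc t1 t0 := uIcc_of_ge hor
    rw [huIcc] at hfint hΔeq hfbd hg0' hgint hlint
    have hmem : ∀ s ∈ Icc (-t0) (-t1), -s ∈ Icc t1 t0 := by
      intro s hs
      exact ⟨by linarith [hs.2], by linarith [hs.1]⟩
    have hnegi : ∀ (h : ℝ → ℝ),
        IntegrableOn h (Icc t1 t0) → IntegrableOn (fun s => h (-s)) (Icc (-t0) (-t1)) := by
      intro h hh
      have hI : IntervalIntegrable h volume t0 t1 := by
        rw [intervalIntegrable_iff]
        exact hh.mono_set (by rw [uIoc_of_ge hor]; exact Ioc_subset_Icc_self)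
      have hI' : IntervalIntegrable (fun s => h (-s)) volume (-t0) (-t1) :=
        (IntervalIntegrable.iff_comp_neg (by simp)).mp hI
      rw [integrableOn_Icc_iff_integrableOn_Ioc]
      exact hI'.1
    have hInegeq : ∀ (h : ℝ → ℝ), IntegrableOn h (Icc t1 t0) →
        ∫ s in Icc (-t0) (-t1), h (-s) = ∫ s in Icc t1 t0, h s := by
      intro h hh
      rw [integral_Icc_eq_integral_Ioc, integral_Icc_eq_integral_Ioc,
        ← intervalIntegral.integral_of_le (by linarith : -t0 ≤ -t1),
        ← intervalIntegral.integral_of_le hor,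
        intervalIntegral.integral_comp_neg]
      simp
    have hfneg : IntegrableOn (fun s => -f (-s)) (Icc (-t0) (-t1)) := by
      have hI : IntervalIntegrable f volume t0 t1 := by
        rw [intervalIntegrable_iff]
        exact hfint.mono_set (by rw [uIoc_of_ge hor]; exact Ioc_subset_Icc_self)
      have hI' : IntervalIntegrable (fun s => f (-s)) volume (-t0) (-t1) :=
        (IntervalIntegrable.iff_comp_neg (by simp)).mp hI
      have : IntegrableOn (fun s => f (-s)) (Icc (-t0) (-t1)) := by
        rw [integrableOn_Icc_iff_integrableOn_Ioc]
        exact hI'.1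
      exact this.neg
    have key := gronwall_aux (-t0) (-t1) (by linarith)
      (fun s => -f (-s)) hfneg
      (fun t => Δ (-t)) ?_ (fun s => g (-s)) (hnegi g hgint)
      (fun s hs => hg0' (-s) (hmem s hs))
      (fun s => l (-s)) (hnegi l hlint) (fun s => hl0 (-s)) ?_
      G hG0 ?_ n ?_ (-t1) ⟨by linarith, le_rfl⟩
    · simpa using key
    · -- hΔ for reflected data
      intro t ht
      have hmt : -t ∈ Icc t1 t0 := hmem t ht
      show Δ (-t) = ∫ s in (-t0)..t, -f (-s)
      rw [hΔeq (-t) hmt, intervalIntegral.integral_neg, intervalIntegral.integral_comp_neg]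
      simp only [neg_neg]
      rw [← intervalIntegral.integral_symm]
    · -- norm bound for reflected data
      intro s hs
      have := hfbd (-s) (hmem s hs)
      simpa using this
    · -- g sum
      rw [hInegeq g hgint]
      exact le_of_eq (by rw [hGdef, huIcc])
    · -- l sum
      rw [hInegeq l hlint]
      rw [show (∫ s in Icc t1 t0, l s) = L by rw [hLdef, huIcc]]
      exact hLn
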